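/- arXiv:0911.0170 — 4 statements merged into one kernel-verified Lean document; each statement's English description precedes it below -/
import Mathlib

section
/- For stochastic vectors p, r in R^N with (p,r) > 0 and α = 1, if p = r then the conflict composition fixes the pair: p¹ = p and r¹ = r if and only if all nonzero coordinates of p are equal. -/
/-- for `α = 1` and equal stochastic vectors `p = r`, the conflict
composition fixes the pair iff all nonzero coordinates of `p` are equal. -/
theorem conflict_fixed_iff_uniform {N : ℕ} (p r : Fin N → ℝ)
    (hp0 : ∀ i, 0 ≤ p i) (hr0 : ∀ i, 0 ≤ r i)
    (hp1 : ∑ i, p i = 1) (hr1 : ∑ i, r i = 1)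
    (hip : 0 < ∑ i, p i * r i) (hip' : ∑ i, p i * r i < 1)
    (hpr : p = r) :
    ((∀ i, p i * (1 - r i) / (1 - ∑ j, p j * r j) = p i) ∧
     (∀ i, r i * (1 - p i) / (1 - ∑ j, p j * r j) = r i)) ↔
    (∀ i j, p i ≠ 0 → p j ≠ 0 → p i = p j) := by
  subst hpr
  set S := ∑ j, p j * p j with hS
  have hS1 : (1:ℝ) - S ≠ 0 := by
    have : S < 1 := hip'
    linarith
  constructor
  · rintro ⟨h1, -⟩ i j hi hj
    have key : ∀ k, p k ≠ 0 → p k = S := by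
      intro k hk
      have h := h1 k
      have h' : p k * (1 - p k) = p k * (1 - S) := (div_eq_iff hS1).mp h
      have := mul_left_cancel₀ hk h'
      linarith
    rw [key i hi, key j hj]
  · intro h
    have key : ∀ i, p i * (1 - p i) / (1 - S) = p i := by
      intro i
      by_cases hi : p i = 0
      · simp [hi]
      · have hSc : S = p i := by
          rw [hS]
          calc ∑ j, p j * p j = ∑ j, p i * p j := by
                apply Finset.sum_congr rfl
                intro j _
                by_cases hj : p j = 0
                · simp [hj]
                · rw [h j i hj hi]
            _ = p i := by rw [← Finset.mul_sum, hp1, mul_one]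
        rw [hSc] at hS1 ⊢
        rw [mul_div_assoc, div_self hS1, mul_one]
    exact ⟨key, key⟩
end

section
/- Let p, r be stochastic vectors with (p,r) > 0 and consider the α = -1 conflict composition. Suppose indices i ≠ k satisfy σ_k > σ_i, ρ_k < ρ_i, and 2ρ_k + σ_k ≤ 2ρ_i + σ_i. Then after one step, σ¹_k ≤ σ¹_i and ρ¹_k < ρ¹_i. -/
/-- Proposition 2, one step: under the critical hypotheses the
dominance reverses after one attractive step. -/
theorem attractive_critical_one_step {N : ℕ} (p r : Fin N → ℝ) (i k : Fin N)
    (hik : i ≠ k)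
    (hp0 : ∀ j, 0 ≤ p j) (hr0 : ∀ j, 0 ≤ r j)
    (hp1 : ∑ j, p j = 1) (hr1 : ∑ j, r j = 1)
    (hip : 0 < ∑ j, p j * r j)
    (hσ : p k + r k > p i + r i)
    (hρ : p k * r k < p i * r i)
    (hcrit : 2 * (p k * r k) + (p k + r k) ≤ 2 * (p i * r i) + (p i + r i)) :
    (p k * (1 + r k) / (1 + ∑ j, p j * r j) + r k * (1 + p k) / (1 + ∑ j, p j * r j) ≤
     p i * (1 + r i) / (1 + ∑ j, p j * r j) + r i * (1 + p i) / (1 + ∑ j, p j * r j)) ∧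
    (p k * (1 + r k) / (1 + ∑ j, p j * r j) * (r k * (1 + p k) / (1 + ∑ j, p j * r j)) <
     p i * (1 + r i) / (1 + ∑ j, p j * r j) * (r i * (1 + p i) / (1 + ∑ j, p j * r j))) := by
  have hz : (0:ℝ) < 1 + ∑ j, p j * r j := by linarith
  have hpi := hp0 i; have hri := hr0 i; have hpk := hp0 k; have hrk := hr0 k
  constructor
  · rw [← add_div, ← add_div, div_le_div_iff₀ hz hz]
    nlinarith
  · rw [div_mul_div_comm, div_mul_div_comm, div_lt_div_iff₀ (by positivity) (by positivity)]
    have h1 : p k * r k * (p k + r k) ≤ p k * r k * (p i + r i + 2 * (p i * r i - p k * r k)) :=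
      mul_le_mul_of_nonneg_left (by linarith) (mul_nonneg hpk hrk)
    have hkey : p k * r k * (1 + (p k + r k) + p k * r k) <
        p i * r i * (1 + (p i + r i) + p i * r i) := by
      nlinarith [sq_nonneg (p i * r i - p k * r k),
        mul_le_mul_of_nonneg_right hρ.le (add_nonneg hpi hri)]
    nlinarith [mul_lt_mul_of_pos_right hkey (mul_pos hz hz)]
end

section
/- For the α = -1 conflict composition, if for indices i, k we have p_i > p_k > 0, r_i > r_k > 0, then the ratio sequences p_i^{(n)}/p_k^{(n)} and r_i^{(n)}/r_k^{(n)} are strictly increasing in n, where (pⁿ, rⁿ) denotes the n-th iterate. -/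
/-- One step of the attractive (`α = -1`) conflict composition. -/
noncomputable def attractiveStep {N : ℕ} (s : (Fin N → ℝ) × (Fin N → ℝ)) :
    (Fin N → ℝ) × (Fin N → ℝ) :=
  (fun i => s.1 i * (1 + s.2 i) / (1 + ∑ j, s.1 j * s.2 j),
   fun i => s.2 i * (1 + s.1 i) / (1 + ∑ j, s.1 j * s.2 j))

private def AttrInv {N : ℕ} (i k : Fin N) (s : (Fin N → ℝ) × (Fin N → ℝ)) : Prop :=
  (∀ j, 0 ≤ s.1 j) ∧ (∀ j, 0 ≤ s.2 j) ∧
    s.1 k < s.1 i ∧ 0 < s.1 k ∧ s.2 k < s.2 i ∧ 0 < s.2 k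

private lemma z_pos {N : ℕ} (s : (Fin N → ℝ) × (Fin N → ℝ))
    (h1 : ∀ j, 0 ≤ s.1 j) (h2 : ∀ j, 0 ≤ s.2 j) :
    0 < 1 + ∑ j, s.1 j * s.2 j := by
  have : 0 ≤ ∑ j, s.1 j * s.2 j :=
    Finset.sum_nonneg fun j _ => mul_nonneg (h1 j) (h2 j)
  linarith

private lemma inv_step {N : ℕ} (i k : Fin N) (s : (Fin N → ℝ) × (Fin N → ℝ))
    (h : AttrInv i k s) : AttrInv i k (attractiveStep s) := by
  obtain ⟨h1, h2, hpik, hpk, hrik, hrk⟩ := h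
  have hz := z_pos s h1 h2
  refine ⟨fun j => ?_, fun j => ?_, ?_, ?_, ?_, ?_⟩
  · exact div_nonneg (mul_nonneg (h1 j) (by linarith [h2 j])) hz.le
  · exact div_nonneg (mul_nonneg (h2 j) (by linarith [h1 j])) hz.le
  · show s.1 k * (1 + s.2 k) / _ < s.1 i * (1 + s.2 i) / _
    apply div_lt_div_of_pos_right ?_ hz
    nlinarith
  · exact div_pos (mul_pos hpk (by linarith)) hz
  · show s.2 k * (1 + s.1 k) / _ < s.2 i * (1 + s.1 i) / _
    apply div_lt_div_of_pos_right ?_ hz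
    nlinarith
  · exact div_pos (mul_pos hrk (by linarith)) hz

private lemma inv_iter {N : ℕ} (i k : Fin N) (s : (Fin N → ℝ) × (Fin N → ℝ))
    (h : AttrInv i k s) (n : ℕ) : AttrInv i k (attractiveStep^[n] s) := by
  induction n with
  | zero => simpa using h
  | succ n ih => rw [Function.iterate_succ_apply']; exact inv_step i k _ ih

/-- under the attractive conflict dynamics the ratio sequences
`p_i^{(n)}/p_k^{(n)}` and `r_i^{(n)}/r_k^{(n)}` are strictly increasing. -/
theorem attractive_ratio_strictMono {N : ℕ} (p r : Fin N → ℝ) (i k : Fin N)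
    (hp0 : ∀ j, 0 ≤ p j) (hr0 : ∀ j, 0 ≤ r j)
    (hp1 : ∑ j, p j = 1) (hr1 : ∑ j, r j = 1)
    (hpik : p i > p k) (hpk : p k > 0)
    (hrik : r i > r k) (hrk : r k > 0) :
    StrictMono (fun n => (attractiveStep^[n] (p, r)).1 i / (attractiveStep^[n] (p, r)).1 k) ∧
    StrictMono (fun n => (attractiveStep^[n] (p, r)).2 i / (attractiveStep^[n] (p, r)).2 k) := by
  have h0 : AttrInv i k (p, r) := ⟨hp0, hr0, hpik, hpk, hrik, hrk⟩
  have key : ∀ n, AttrInv i k (attractiveStep^[n] (p, r)) := inv_iter i k _ h0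
  constructor
  · apply strictMono_nat_of_lt_succ
    intro n
    obtain ⟨h1, h2, hpik', hpk', hrik', hrk'⟩ := key n
    have hz := z_pos _ h1 h2
    rw [Function.iterate_succ_apply']
    set s := attractiveStep^[n] (p, r)
    show _ < s.1 i * (1 + s.2 i) / _ / (s.1 k * (1 + s.2 k) / _)
    have e : s.1 i * (1 + s.2 i) / (1 + ∑ j, s.1 j * s.2 j) /
        (s.1 k * (1 + s.2 k) / (1 + ∑ j, s.1 j * s.2 j)) =
        s.1 i * (1 + s.2 i) / (s.1 k * (1 + s.2 k)) := by
      field_simp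
    rw [e, div_lt_div_iff₀ hpk' (by positivity)]
    nlinarith [mul_pos (mul_pos (hpk'.trans hpik') hpk') (sub_pos.mpr hrik')]
  · apply strictMono_nat_of_lt_succ
    intro n
    obtain ⟨h1, h2, hpik', hpk', hrik', hrk'⟩ := key n
    have hz := z_pos _ h1 h2
    rw [Function.iterate_succ_apply']
    set s := attractiveStep^[n] (p, r)
    show _ < s.2 i * (1 + s.1 i) / _ / (s.2 k * (1 + s.1 k) / _)
    have e : s.2 i * (1 + s.1 i) / (1 + ∑ j, s.1 j * s.2 j) /
        (s.2 k * (1 + s.1 k) / (1 + ∑ j, s.1 j * s.2 j)) =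
        s.2 i * (1 + s.1 i) / (s.2 k * (1 + s.1 k)) := by
      field_simp
    rw [e, div_lt_div_iff₀ hrk' (by positivity)]
    nlinarith [mul_pos (mul_pos (hrk'.trans hrik') hrk') (sub_pos.mpr hpik')]
end

section
/- For the α = 1 conflict composition iterated n times on stochastic vectors p ≠ r (with all normalizers z_m = 1 - (p^{(m)}, r^{(m)}) positive), the normalized differences are invariant: d^{(n)}_i / D^{(n)} = d_i / D for all n, where d^{(n)}_i = p^{(n)}_i - r^{(n)}_i and D^{(n)} = Σ_{i: d^{(n)}_i > 0} d^{(n)}_i. -/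
/-- One step of the repulsive (`α = 1`) conflict composition. -/
noncomputable def repulsiveStep {N : ℕ} (s : (Fin N → ℝ) × (Fin N → ℝ)) :
    (Fin N → ℝ) × (Fin N → ℝ) :=
  (fun i => s.1 i * (1 - s.2 i) / (1 - ∑ j, s.1 j * s.2 j),
   fun i => s.2 i * (1 - s.1 i) / (1 - ∑ j, s.1 j * s.2 j))

lemma repulsive_diff_scaled {N : ℕ} (p r : Fin N → ℝ) (n : ℕ)
    (hz : ∀ m < n, 0 < 1 - ∑ j, (repulsiveStep^[m] (p, r)).1 j * (repulsiveStep^[m] (p, r)).2 j) :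
    ∃ c : ℝ, 0 < c ∧ ∀ i,
      (repulsiveStep^[n] (p, r)).1 i - (repulsiveStep^[n] (p, r)).2 i = c * (p i - r i) := by
  induction n with
  | zero => exact ⟨1, one_pos, fun i => by simp⟩
  | succ n ih =>
    obtain ⟨c, hc, hdiff⟩ := ih (fun m hm => hz m (Nat.lt_succ_of_lt hm))
    have hzn := hz n (Nat.lt_succ_self n)
    refine ⟨c / (1 - ∑ j, (repulsiveStep^[n] (p, r)).1 j * (repulsiveStep^[n] (p, r)).2 j),
      div_pos hc hzn, fun i => ?_⟩
    rw [Function.iterate_succ_apply']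
    set s := repulsiveStep^[n] (p, r)
    show s.1 i * (1 - s.2 i) / _ - s.2 i * (1 - s.1 i) / _ = _
    rw [div_sub_div_same]
    have : s.1 i * (1 - s.2 i) - s.2 i * (1 - s.1 i) = s.1 i - s.2 i := by ring
    rw [this, hdiff i]
    ring

/-- the normalized differences `d_i^{(n)}/D^{(n)}` are invariant
along the `α = 1` conflict dynamics. -/
theorem repulsive_normalized_difference_invariant {N : ℕ} (p r : Fin N → ℝ)
    (hp0 : ∀ i, 0 ≤ p i) (hr0 : ∀ i, 0 ≤ r i)
    (hp1 : ∑ i, p i = 1) (hr1 : ∑ i, r i = 1)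
    (hne : p ≠ r)
    (n : ℕ)
    (hz : ∀ m < n, 0 < 1 - ∑ j, (repulsiveStep^[m] (p, r)).1 j * (repulsiveStep^[m] (p, r)).2 j)
    (i : Fin N) :
    ((repulsiveStep^[n] (p, r)).1 i - (repulsiveStep^[n] (p, r)).2 i) /
        (∑ j ∈ Finset.univ.filter
            (fun j => 0 < (repulsiveStep^[n] (p, r)).1 j - (repulsiveStep^[n] (p, r)).2 j),
          ((repulsiveStep^[n] (p, r)).1 j - (repulsiveStep^[n] (p, r)).2 j)) =
      (p i - r i) / (∑ j ∈ Finset.univ.filter (fun j => 0 < p j - r j), (p j - r j)) := by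
  obtain ⟨c, hc, hdiff⟩ := repulsive_diff_scaled p r n hz
  have hfilter : (Finset.univ.filter
      (fun j => 0 < (repulsiveStep^[n] (p, r)).1 j - (repulsiveStep^[n] (p, r)).2 j)) =
      Finset.univ.filter (fun j => 0 < p j - r j) := by
    apply Finset.filter_congr
    intro j _
    rw [hdiff j]
    simp [mul_pos_iff_of_pos_left, hc]
  rw [hfilter, hdiff i]
  rw [Finset.sum_congr rfl (fun j _ => hdiff j), ← Finset.mul_sum,
    mul_div_mul_left _ _ (ne_of_gt hc)]
end
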